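/- arXiv:1103.2459 — 4 statements merged into one kernel-verified Lean document; each statement's English description precedes it below -/
import Mathlib

section
/- Let K be a field of characteristic p ≥ 0, S = K[x_1, …, x_ℓ], and let f = α_1 ⋯ α_n be a product of pairwise non-proportional nonzero linear forms (a central hyperplane arrangement). Let a ∈ K^ℓ with f(a) = 0, set k = #{i : α_i(a) = 0}, and suppose p does not divide k. Then, with m_a = (x_1 − a_1, …, x_ℓ − a_ℓ) the maximal ideal at a, there exist a K-linear derivation θ of the localization S_{m_a} and an element g ∈ S_{m_a} generating the ideal f·S_{m_a} such that θ(g) = g; concretely, g = ∏_{i : α_i(a)=0} α_i generates f·S_{m_a} and the derivation θ = (1/k) Σ_j (x_j − a_j) ∂/∂x_j satisfies θ(g) = g. (That is, a hyperplane arrangement over a field of good characteristic is an Euler-homogeneous divisor.) -/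
open MvPolynomial

/-- The multiplicative set of polynomials not vanishing at the point `a`; this is the
complement of the maximal ideal `m_a = (x_1 - a_1, …, x_ℓ - a_ℓ)`, so that localizing at it
gives the local ring `S_{m_a}`. -/
def nonvanishingAt (K : Type) [Field K] (ℓ : ℕ) (a : Fin ℓ → K) :
    Submonoid (MvPolynomial (Fin ℓ) K) where
  carrier := {s | eval a s ≠ 0}
  mul_mem' := fun {x y} hx hy => by
    simpa using mul_ne_zero hx hy
  one_mem' := by simp


section LocDeriv

variable {R A : Type*} [CommRing R] [CommRing A] [Algebra R A] [IsDomain A]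
variable (M : Submonoid A)

/-- Numerator/denominator formula for the extension of a derivation to a localization. -/
noncomputable def locDerivFun (hM : (0 : A) ∉ M) (D : Derivation R A A) (x : Localization M) :
    Localization M :=
  Localization.liftOn x
    (fun r s => Localization.mk ((s : A) * D r - r * D (s : A)) ⟨(s : A) * s, M.mul_mem s.2 s.2⟩)
    (fun {r r' s s'} h => by
      rw [Localization.r_iff_exists] at h
      obtain ⟨c, hc⟩ := h
      have hc0 : (c : A) ≠ 0 := fun h0 => hM (h0 ▸ c.2)
      have h1 : (s' : A) * r = (s : A) * r' := mul_left_cancel₀ hc0 hc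
      have h2 := congrArg D h1
      simp only [Derivation.leibniz, smul_eq_mul] at h2
      rw [Localization.mk_eq_mk_iff, Localization.r_iff_exists]
      refine ⟨1, ?_⟩
      simp only [Submonoid.coe_mul, Submonoid.coe_one, one_mul]
      linear_combination ((s : A) * (s' : A)) * h2 - ((s' : A) * D (s : A) + (s : A) * D (s' : A)) * h1)

theorem locDerivFun_mk (D : Derivation R A A) (hM : (0 : A) ∉ M) (r : A) (s : M) :
    locDerivFun M hM D (Localization.mk r s) =
      Localization.mk ((s : A) * D r - r * D (s : A)) ⟨(s : A) * s, M.mul_mem s.2 s.2⟩ :=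
  Localization.liftOn_mk _ _ _ _

/-- Extension of a derivation to the localization of a domain. -/
noncomputable def locDeriv (hM : (0 : A) ∉ M) (D : Derivation R A A) :
    Derivation R (Localization M) (Localization M) where
  toFun := locDerivFun M hM D
  map_add' x y := by
    refine Localization.induction_on₂ x y ?_
    rintro ⟨r, s⟩ ⟨r', s'⟩
    simp only [Localization.add_mk, locDerivFun_mk]
    rw [Localization.mk_eq_mk_iff, Localization.r_iff_exists]
    refine ⟨1, ?_⟩
    simp only [Derivation.leibniz, Derivation.map_add, smul_eq_mul, Submonoid.coe_mul,
      Submonoid.coe_one, one_mul]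
    ring
  map_smul' c x := by
    refine Localization.induction_on x ?_
    rintro ⟨r, s⟩
    show locDerivFun M hM D (c • Localization.mk r s) =
      c • locDerivFun M hM D (Localization.mk r s)
    rw [Localization.smul_mk, locDerivFun_mk, locDerivFun_mk, Localization.smul_mk]
    congr 1
    rw [D.map_smul]
    rw [smul_sub, mul_smul_comm, smul_mul_assoc]
  map_one_eq_zero' := by
    show locDerivFun M hM D 1 = 0
    rw [← Localization.mk_self (1 : M), locDerivFun_mk, sub_self]
    exact Localization.mk_zero _
  leibniz' x y := by
    refine Localization.induction_on₂ x y ?_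
    rintro ⟨r, s⟩ ⟨r', s'⟩
    show locDerivFun M hM D (Localization.mk r s * Localization.mk r' s') = _
    rw [Localization.mk_mul, locDerivFun_mk]
    simp only [smul_eq_mul]
    show _ = Localization.mk r s * locDerivFun M hM D (Localization.mk r' s') +
      Localization.mk r' s' * locDerivFun M hM D (Localization.mk r s)
    rw [locDerivFun_mk, locDerivFun_mk, Localization.mk_mul, Localization.mk_mul,
      Localization.add_mk]
    rw [Localization.mk_eq_mk_iff, Localization.r_iff_exists]
    refine ⟨1, ?_⟩
    simp only [Derivation.leibniz, smul_eq_mul, Submonoid.coe_mul, Submonoid.coe_one, one_mul]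
    ring

theorem locDeriv_algebraMap (hM : (0 : A) ∉ M) (D : Derivation R A A) (r : A) :
    locDeriv M hM D (algebraMap A (Localization M) r) =
      algebraMap A (Localization M) (D r) := by
  rw [← Localization.mk_one_eq_algebraMap, ← Localization.mk_one_eq_algebraMap]
  show locDerivFun M hM D (Localization.mk r 1) = _
  rw [locDerivFun_mk]
  simp only [Submonoid.coe_one, one_mul, Derivation.map_one_eq_zero, mul_zero, sub_zero]
  rw [Localization.mk_eq_mk_iff, Localization.r_iff_exists]
  exact ⟨1, by simp⟩

end LocDeriv


lemma degree_one_exists_single {σ : Type*} (d : σ →₀ ℕ) (h : Finsupp.degree d = 1) :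
    ∃ j, d = Finsupp.single j 1 := by
  classical
  have hd0 : d ≠ 0 := by
    intro h0
    rw [h0, map_zero] at h
    exact one_ne_zero h.symm
  obtain ⟨j, hj⟩ := Finsupp.ne_iff.1 hd0
  rw [Finsupp.coe_zero, Pi.zero_apply] at hj
  have hjs : j ∈ d.support := Finsupp.mem_support_iff.2 hj
  have hdeg : Finsupp.degree d = ∑ i ∈ d.support, d i := rfl
  have hcard : d.support.card ≤ 1 := by
    have h1 := Finset.card_nsmul_le_sum d.support d 1
      (fun i hi => Nat.one_le_iff_ne_zero.2 (Finsupp.mem_support_iff.1 hi))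
    rw [← hdeg, h, smul_eq_mul, mul_one] at h1
    exact h1
  have hsupp : d.support = {j} := by
    apply Finset.eq_singleton_iff_unique_mem.2
    refine ⟨hjs, fun i hi => ?_⟩
    by_contra hij
    have h2 : ({i, j} : Finset σ).card ≤ d.support.card := by
      apply Finset.card_le_card
      intro x hx
      rcases Finset.mem_insert.1 hx with rfl | hx
      · exact hi
      · rw [Finset.mem_singleton.1 hx]; exact hjs
    rw [Finset.card_insert_of_notMem (by simpa using hij), Finset.card_singleton] at h2
    omega
  have hdj : d j = 1 := by
    have h3 : Finsupp.degree d = d j := by rw [hdeg, hsupp, Finset.sum_singleton]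
    omega
  refine ⟨j, ?_⟩
  ext i
  by_cases hij : i = j
  · subst hij; simp [hdj]
  · rw [Finsupp.single_eq_of_ne' (Ne.symm hij)]
    by_contra hne
    have : i ∈ d.support := Finsupp.mem_support_iff.2 hne
    rw [hsupp, Finset.mem_singleton] at this
    exact hij this

variable {K : Type} [Field K] {ℓ : ℕ}

/-- The (un-normalized) Euler-type derivation centered at `a`. -/
noncomputable def eulerD (a : Fin ℓ → K) :
    Derivation K (MvPolynomial (Fin ℓ) K) (MvPolynomial (Fin ℓ) K) :=
  mkDerivation K (fun j => X j - C (a j))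

lemma eulerD_apply (a : Fin ℓ → K) (s : MvPolynomial (Fin ℓ) K) :
    eulerD a s = ∑ j, (X j - C (a j)) * pderiv j s := by
  classical
  have h : eulerD a = ∑ j : Fin ℓ, (X j - C (a j)) • (pderiv j :
      Derivation K (MvPolynomial (Fin ℓ) K) (MvPolynomial (Fin ℓ) K)) := by
    apply derivation_ext
    intro i
    rw [eulerD, mkDerivation_X]
    have hc : ⇑(∑ j : Fin ℓ, (X j - C (a j)) • (pderiv j :
        Derivation K (MvPolynomial (Fin ℓ) K) (MvPolynomial (Fin ℓ) K))) =
        ∑ j : Fin ℓ, ⇑((X j - C (a j)) • (pderiv j :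
        Derivation K (MvPolynomial (Fin ℓ) K) (MvPolynomial (Fin ℓ) K))) :=
      map_sum Derivation.coeFnAddMonoidHom _ _
    rw [hc]
    rw [Finset.sum_apply]
    rw [Finset.sum_eq_single i]
    · simp [Derivation.smul_apply, pderiv_X_self, smul_eq_mul]
    · intro b _ hb
      simp [Derivation.smul_apply, pderiv_X_of_ne (Ne.symm hb)]
    · intro hi; exact absurd (Finset.mem_univ i) hi
  rw [h]
  have hc : ⇑(∑ j : Fin ℓ, (X j - C (a j)) • (pderiv j :
      Derivation K (MvPolynomial (Fin ℓ) K) (MvPolynomial (Fin ℓ) K))) =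
      ∑ j : Fin ℓ, ⇑((X j - C (a j)) • (pderiv j :
      Derivation K (MvPolynomial (Fin ℓ) K) (MvPolynomial (Fin ℓ) K))) :=
    map_sum Derivation.coeFnAddMonoidHom _ _
  rw [hc, Finset.sum_apply]
  exact Finset.sum_congr rfl fun j _ => by simp [Derivation.smul_apply, smul_eq_mul]

lemma eulerD_isHomogeneous_one (a : Fin ℓ → K) (α : MvPolynomial (Fin ℓ) K)
    (h : α.IsHomogeneous 1) : eulerD a α = α - C (eval a α) := by
  classical
  have key : ∀ d ∈ α.support, eulerD a (monomial d (coeff d α)) =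
      monomial d (coeff d α) - C (eval a (monomial d (coeff d α))) := by
    intro d hd
    have hdeg : Finsupp.degree d = 1 := by
      rw [Finsupp.degree_eq_weight_one]
      exact h (MvPolynomial.mem_support_iff.1 hd)
    obtain ⟨j, rfl⟩ := degree_one_exists_single d hdeg
    set c := coeff (Finsupp.single j 1) α with hc
    rw [← C_mul_X_eq_monomial]
    rw [Derivation.leibniz]
    have h1 : eulerD a (C c) = 0 := by
      rw [← MvPolynomial.algebraMap_eq, Derivation.map_algebraMap]
    have h2 : eulerD a (X j) = X j - C (a j) := by
      rw [eulerD, mkDerivation_X]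
    rw [h1, h2, smul_zero, add_zero, smul_eq_mul]
    have h3 : eval a (C c * X j) = c * a j := by simp
    rw [h3, map_mul]
    ring
  conv_lhs => rw [← support_sum_monomial_coeff α]
  rw [map_sum, Finset.sum_congr rfl key, Finset.sum_sub_distrib,
    support_sum_monomial_coeff, ← map_sum, ← map_sum, support_sum_monomial_coeff]

lemma deriv_prod_self {R A ι : Type*} [CommRing R] [CommRing A] [Algebra R A]
    (D : Derivation R A A) (T : Finset ι) (b : ι → A)
    (h : ∀ i ∈ T, D (b i) = b i) : D (∏ i ∈ T, b i) = T.card • ∏ i ∈ T, b i := by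
  classical
  induction T using Finset.induction_on with
  | empty => simp
  | insert x T' hx ih =>
    rw [Finset.prod_insert hx, Derivation.leibniz, ih (fun i hi => h i (Finset.mem_insert_of_mem hi)),
      h x (Finset.mem_insert_self x T'), Finset.card_insert_of_notMem hx, smul_eq_mul, smul_eq_mul,
      succ_nsmul]
    rw [mul_smul_comm, mul_comm]

open Classical in
/-- Let `K` be a field of characteristic `p ≥ 0`, `S = K[x_1, …, x_ℓ]`, and
`f = α_1 ⋯ α_n` a product of pairwise non-proportional nonzero linear forms.  Let `a ∈ K^ℓ`
with `f(a) = 0`, let `k = #{i : α_i(a) = 0}`, and suppose `p ∤ k`.  Then, in the localization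
`S_{m_a}`, the element `g = ∏_{i : α_i(a) = 0} α_i` generates the ideal `f·S_{m_a}`, and
there is a `K`-linear derivation `θ` of `S_{m_a}`, given on `S` by
`θ = (1/k) Σ_j (x_j - a_j) ∂/∂x_j`, with `θ(g) = g`.  (A hyperplane arrangement in good
characteristic is Euler homogeneous.) -/
theorem arrangement_euler_homogeneous (K : Type) [Field K] (ℓ n : ℕ)
    (α : Fin n → MvPolynomial (Fin ℓ) K)
    (hlin : ∀ i, α i ≠ 0 ∧ (α i).IsHomogeneous 1)
    (hprop : ∀ i j, i ≠ j → ∀ c : K, α j ≠ c • α i)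
    (f : MvPolynomial (Fin ℓ) K) (hf : f = ∏ i, α i)
    (a : Fin ℓ → K) (ha : eval a f = 0)
    (k : ℕ) (hk : k = (Finset.univ.filter fun i => eval a (α i) = 0).card)
    (hchar : ¬ (ringChar K ∣ k)) :
    Ideal.span {algebraMap (MvPolynomial (Fin ℓ) K) (Localization (nonvanishingAt K ℓ a)) f} =
      Ideal.span {algebraMap (MvPolynomial (Fin ℓ) K) (Localization (nonvanishingAt K ℓ a))
        (∏ i ∈ Finset.univ.filter fun i => eval a (α i) = 0, α i)} ∧
    ∃ θ : Derivation K (Localization (nonvanishingAt K ℓ a))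
        (Localization (nonvanishingAt K ℓ a)),
      (∀ s : MvPolynomial (Fin ℓ) K,
        θ (algebraMap (MvPolynomial (Fin ℓ) K) (Localization (nonvanishingAt K ℓ a)) s) =
        algebraMap (MvPolynomial (Fin ℓ) K) (Localization (nonvanishingAt K ℓ a))
          (((k : K)⁻¹) • ∑ j, (X j - C (a j)) * pderiv j s)) ∧
      θ (algebraMap (MvPolynomial (Fin ℓ) K) (Localization (nonvanishingAt K ℓ a))
          (∏ i ∈ Finset.univ.filter fun i => eval a (α i) = 0, α i)) =
        algebraMap (MvPolynomial (Fin ℓ) K) (Localization (nonvanishingAt K ℓ a))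
          (∏ i ∈ Finset.univ.filter fun i => eval a (α i) = 0, α i) := by
  classical
  have hM0 : (0 : MvPolynomial (Fin ℓ) K) ∉ nonvanishingAt K ℓ a :=
    fun h0 => h0 (map_zero (eval a))
  have hfgh : f = (∏ i ∈ Finset.univ.filter fun i => eval a (α i) = 0, α i) *
      ∏ i ∈ Finset.univ.filter fun i => ¬ eval a (α i) = 0, α i := by
    rw [hf, Finset.prod_filter_mul_prod_filter_not Finset.univ (fun i => eval a (α i) = 0) α]
  have hh'M : (∏ i ∈ Finset.univ.filter fun i => ¬ eval a (α i) = 0, α i) ∈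
      nonvanishingAt K ℓ a := by
    show eval a (∏ i ∈ Finset.univ.filter fun i => ¬ eval a (α i) = 0, α i) ≠ 0
    rw [map_prod, Finset.prod_ne_zero_iff]
    intro i hi
    exact (Finset.mem_filter.1 hi).2
  have hknz : (k : K) ≠ 0 := by
    intro h0
    exact hchar ((CharP.cast_eq_zero_iff K (ringChar K) k).1 h0)
  constructor
  · rw [hfgh, map_mul]
    exact Ideal.span_singleton_mul_right_unit
      (IsLocalization.map_units (Localization (nonvanishingAt K ℓ a)) ⟨_, hh'M⟩) _
  · have hDapp : ∀ s : MvPolynomial (Fin ℓ) K,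
        ((C ((k : K)⁻¹) : MvPolynomial (Fin ℓ) K) • eulerD a) s =
          ((k : K)⁻¹) • ∑ j, (X j - C (a j)) * pderiv j s := by
      intro s
      rw [Derivation.smul_apply, smul_eq_mul, ← smul_eq_C_mul, eulerD_apply]
    refine ⟨locDeriv (nonvanishingAt K ℓ a) hM0 ((C ((k : K)⁻¹) : MvPolynomial (Fin ℓ) K) • eulerD a),
      fun s => ?_, ?_⟩
    · rw [locDeriv_algebraMap, hDapp]
    · rw [locDeriv_algebraMap]
      congr 1
      rw [hDapp, ← eulerD_apply, deriv_prod_self _ _ _ ?hfac, ← hk,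
        ← Nat.cast_smul_eq_nsmul K k, smul_smul, inv_mul_cancel₀ hknz, one_smul]
      case hfac =>
        intro i hi
        rw [eulerD_isHomogeneous_one a (α i) (hlin i).2, (Finset.mem_filter.1 hi).2, map_zero,
          sub_zero]
end

section
/- For n ≥ 4, the Laurent polynomial (n−3)t^{−1} + (1−n) + (n−1)t^{n−3} + (3−n)t^{n−2} ∈ ℤ[t, t^{−1}] is divisible by (1−t)^3 in ℤ[t, t^{−1}], and the quotient q_n(t) = ((n−3)t^{−1} + (1−n) + (n−1)t^{n−3} + (3−n)t^{n−2})/(1−t)^3 satisfies q_n(1) = C(n−1, 3). (This is the statement that the Hilbert series q_n(t) of Ext^1_S(Ω^1_0(A), S) for a generic rank-3 arrangement of n hyperplanes is a Laurent polynomial whose total value, the length of the module, equals C(n−1, 3).) -/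
open LaurentPolynomial

/-- Evaluation of a Laurent polynomial at `1`: the ring homomorphism
`ℤ[T;T⁻¹] → ℤ` sending `T ↦ 1` (i.e. the sum of the coefficients). -/
noncomputable def laurentEvalOne : ℤ[T;T⁻¹] →ₐ[ℤ] ℤ :=
  (AddMonoidAlgebra.lift ℤ ℤ ℤ) 1

lemma evalOne_T (k : ℤ) : laurentEvalOne (T k) = 1 := by
  rw [laurentEvalOne, LaurentPolynomial.T, AddMonoidAlgebra.lift_single]
  simp

lemma evalOne_toLaurent (p : Polynomial ℤ) :
    laurentEvalOne (Polynomial.toLaurent p) = p.eval 1 := by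
  have h : laurentEvalOne.comp Polynomial.toLaurentAlg = Polynomial.aeval (1 : ℤ) := by
    apply Polynomial.algHom_ext
    simp [Polynomial.toLaurentAlg, evalOne_T]
  have h2 := DFunLike.congr_fun h p
  have h3 : Polynomial.toLaurentAlg p = Polynomial.toLaurent p := rfl
  rw [AlgHom.comp_apply, h3] at h2
  simpa using h2

lemma helper2 (m : ℕ) : ∃ r : Polynomial ℤ,
    (1 - Polynomial.X) ^ 2 * r
      = 1 - ((m : Polynomial ℤ) + 2) * Polynomial.X ^ (m + 1)
          + ((m : Polynomial ℤ) + 1) * Polynomial.X ^ (m + 2) ∧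
    r.eval 1 = (m + 2).choose 2 := by
  induction m with
  | zero => exact ⟨1, by push_cast; ring, by simp⟩
  | succ k ih =>
    obtain ⟨r, h1, h2⟩ := ih
    refine ⟨r + ((k : Polynomial ℤ) + 2) * Polynomial.X ^ (k + 1),
      by push_cast; linear_combination h1, ?_⟩
    simp only [Polynomial.eval_add, Polynomial.eval_mul, Polynomial.eval_pow,
      Polynomial.eval_X, Polynomial.eval_natCast, Polynomial.eval_ofNat, one_pow, h2]
    rw [Nat.choose_succ_succ (k + 2) 1]
    push_cast [Nat.choose_one_right]
    ring

lemma helper3 (m : ℕ) : ∃ p : Polynomial ℤ,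
    ((m : Polynomial ℤ) + 1) - ((m : Polynomial ℤ) + 3) * Polynomial.X
      + ((m : Polynomial ℤ) + 3) * Polynomial.X ^ (m + 2)
      - ((m : Polynomial ℤ) + 1) * Polynomial.X ^ (m + 3)
      = (1 - Polynomial.X) ^ 3 * p ∧
    p.eval 1 = (m + 3).choose 3 := by
  induction m with
  | zero => exact ⟨1, by push_cast; ring, by simp⟩
  | succ k ih =>
    obtain ⟨p, h1, h2⟩ := ih
    obtain ⟨r, hr1, hr2⟩ := helper2 (k + 1)
    refine ⟨p + r, by push_cast at hr1 ⊢; linear_combination h1 - (1 - Polynomial.X) * hr1, ?_⟩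
    simp only [Polynomial.eval_add, h2, hr2]
    rw [Nat.choose_succ_succ (k + 3) 2]
    push_cast
    ring

/-- For `n ≥ 4`, the Laurent polynomial
`(n-3)t⁻¹ + (1-n) + (n-1)t^{n-3} + (3-n)t^{n-2}` is divisible by `(1-t)³` in `ℤ[t, t⁻¹]`,
and the quotient `q_n(t)` satisfies `q_n(1) = C(n-1, 3)`. -/
theorem laurent_hilbert_series_length (n : ℕ) (hn : 4 ≤ n) :
    ∃ q : ℤ[T;T⁻¹],
      C ((n : ℤ) - 3) * T (-1) + C (1 - (n : ℤ)) + C ((n : ℤ) - 1) * T ((n : ℤ) - 3)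
          + C (3 - (n : ℤ)) * T ((n : ℤ) - 2) =
        (1 - T 1) ^ 3 * q ∧
      laurentEvalOne q = (n - 1).choose 3 := by
  obtain ⟨m, rfl⟩ : ∃ m, n = m + 4 := ⟨n - 4, by omega⟩
  obtain ⟨p, h1, h2⟩ := helper3 m
  refine ⟨Polynomial.toLaurent p * T (-1), ?_, ?_⟩
  · have H := congrArg Polynomial.toLaurent h1
    simp only [map_sub, map_add, map_mul, map_pow, map_one, map_natCast, map_ofNat,
      Polynomial.toLaurent_X] at H
    have hc1 : C (((m + 4 : ℕ) : ℤ) - 3) = (m : ℤ[T;T⁻¹]) + 1 := by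
      rw [show ((m + 4 : ℕ) : ℤ) - 3 = (m : ℤ) + 1 by push_cast; ring]
      simp [map_add, map_one, map_natCast]
    have hc2 : C (1 - ((m + 4 : ℕ) : ℤ)) = -(m : ℤ[T;T⁻¹]) - 3 := by
      rw [show 1 - ((m + 4 : ℕ) : ℤ) = -((m : ℤ) + 3) by push_cast; ring]
      push_cast [map_neg, map_add, map_natCast, map_ofNat]
      ring
    have hc3 : C (((m + 4 : ℕ) : ℤ) - 1) = (m : ℤ[T;T⁻¹]) + 3 := by
      rw [show ((m + 4 : ℕ) : ℤ) - 1 = (m : ℤ) + 3 by push_cast; ring]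
      push_cast [map_add, map_natCast, map_ofNat]
      ring
    have hc4 : C (3 - ((m + 4 : ℕ) : ℤ)) = -(m : ℤ[T;T⁻¹]) - 1 := by
      rw [show 3 - ((m + 4 : ℕ) : ℤ) = -((m : ℤ) + 1) by push_cast; ring]
      push_cast [map_neg, map_add, map_natCast, map_one]
      ring
    have ht1 : T (((m + 4 : ℕ) : ℤ) - 3) = (T 1 ^ (m + 1) : ℤ[T;T⁻¹]) := by
      rw [T_pow (R := ℤ) 1 (m + 1)]
      congr 1
      push_cast; ring
    have ht2 : T (((m + 4 : ℕ) : ℤ) - 2) = (T 1 ^ (m + 2) : ℤ[T;T⁻¹]) := by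
      rw [T_pow (R := ℤ) 1 (m + 2)]
      congr 1
      push_cast; ring
    rw [hc1, hc2, hc3, hc4, ht1, ht2]
    have f1 : (T 1 * T (-1) : ℤ[T;T⁻¹]) = 1 := by rw [← T_add]; norm_num
    linear_combination T (-1) * H +
      (((m : ℤ[T;T⁻¹]) + 3) - ((m : ℤ[T;T⁻¹]) + 3) * T 1 ^ (m + 1)
        + ((m : ℤ[T;T⁻¹]) + 1) * T 1 ^ (m + 2)) * f1
  · rw [map_mul, evalOne_toLaurent, evalOne_T, h2]
    norm_num
end

section
/- Define, for integers p ≥ 1 and ℓ ≥ p + 2, the rational function Q(ℓ, p) = t^{−p} s^{ℓ+1} / ((1−s)^{p+1}(1−st)^{ℓ−p}) ∈ ℚ(s, t). Let T ∈ ℚ(s,t)[[u, v]] be the formal power series in u and v over the field ℚ(s, t) whose coefficient of u^ℓ v^p equals Q(ℓ, p) when p ≥ 1 and ℓ ≥ p + 2, and equals 0 otherwise. Then T · (1−s)(1−st) · ((1−st) − su) · ((t−st) − suv) = s^4 u^3 v; equivalently, T = s^4 u^3 v / ((1−s)(1−st)(1−st−su)(t−st−suv)). -/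
/-- The field `ℚ(s, t)` of rational functions in two variables over `ℚ`. -/
noncomputable abbrev QQst : Type := FractionRing (MvPolynomial (Fin 2) ℚ)

/-- The variable `s` of `ℚ(s, t)`. -/
noncomputable def svar : QQst := algebraMap (MvPolynomial (Fin 2) ℚ) QQst (MvPolynomial.X 0)

/-- The variable `t` of `ℚ(s, t)`. -/
noncomputable def tvar : QQst := algebraMap (MvPolynomial (Fin 2) ℚ) QQst (MvPolynomial.X 1)

/-- `Q(ℓ, p) = t^{-p} s^{ℓ+1} / ((1-s)^{p+1} (1-st)^{ℓ-p}) ∈ ℚ(s, t)`. -/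
noncomputable def Qlp (l p : ℕ) : QQst :=
  tvar⁻¹ ^ p * svar ^ (l + 1) / ((1 - svar) ^ (p + 1) * (1 - svar * tvar) ^ (l - p))

/-- The formal power series `T ∈ ℚ(s,t)[[u, v]]` whose coefficient of `u^ℓ v^p` is
`Q(ℓ, p)` when `p ≥ 1` and `ℓ ≥ p + 2`, and `0` otherwise (the first variable is `u`,
the second is `v`). -/
noncomputable def Tser : MvPowerSeries (Fin 2) QQst :=
  fun e => if 1 ≤ e 1 ∧ e 1 + 2 ≤ e 0 then Qlp (e 0) (e 1) else 0

/- ## Auxiliary material -/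

lemma alg_inj : Function.Injective (algebraMap (MvPolynomial (Fin 2) ℚ) QQst) :=
  IsFractionRing.injective _ _

lemma tvar_ne : tvar ≠ 0 := by
  intro h
  rw [tvar, ← map_zero (algebraMap (MvPolynomial (Fin 2) ℚ) QQst)] at h
  exact MvPolynomial.X_ne_zero 1 (alg_inj h)

lemma one_sub_svar_ne : (1 : QQst) - svar ≠ 0 := by
  have h1 : (1 : QQst) - svar
      = algebraMap (MvPolynomial (Fin 2) ℚ) QQst (1 - MvPolynomial.X 0) := by
    simp [svar, map_sub]
  rw [h1, ← map_zero (algebraMap (MvPolynomial (Fin 2) ℚ) QQst)]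
  intro h
  have := congrArg (MvPolynomial.eval (fun _ => (0:ℚ))) (alg_inj h)
  simp at this

lemma one_sub_st_ne : (1 : QQst) - svar * tvar ≠ 0 := by
  have h1 : (1 : QQst) - svar * tvar
      = algebraMap (MvPolynomial (Fin 2) ℚ) QQst (1 - MvPolynomial.X 0 * MvPolynomial.X 1) := by
    simp [svar, tvar, map_sub, map_mul]
  rw [h1, ← map_zero (algebraMap (MvPolynomial (Fin 2) ℚ) QQst)]
  intro h
  have := congrArg (MvPolynomial.eval (fun _ => (0:ℚ))) (alg_inj h)
  simp at this

/-- The coefficient function of `Tser`. -/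
noncomputable def Tc (l p : ℕ) : QQst := if 1 ≤ p ∧ p + 2 ≤ l then Qlp l p else 0

noncomputable def a0c : QQst := tvar * (1 - svar) ^ 2 * (1 - svar * tvar) ^ 2
noncomputable def a1c : QQst := -(svar * tvar * (1 - svar) ^ 2 * (1 - svar * tvar))
noncomputable def a2c : QQst := -(svar * (1 - svar) * (1 - svar * tvar) ^ 2)
noncomputable def a3c : QQst := svar ^ 2 * (1 - svar) * (1 - svar * tvar)

lemma pairA (p m : ℕ) : Qlp (p + m + 1) p * a0c + Qlp (p + m) p * a1c = 0 := by
  have ht := tvar_ne; have h1s := one_sub_svar_ne; have h1st := one_sub_st_ne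
  rw [Qlp, Qlp, a0c, a1c,
    show p + m + 1 - p = m + 1 from by omega, show p + m - p = m from by omega,
    show p + m + 1 + 1 = p + m + 2 from by omega]
  rw [div_mul_eq_mul_div, div_mul_eq_mul_div, div_add_div _ _ (by positivity) (by positivity),
    div_eq_zero_iff]
  left
  ring

lemma pairB (q m : ℕ) : Qlp (q + m + 1) (q + 1) * a0c + Qlp (q + m) q * a2c = 0 := by
  have ht := tvar_ne; have h1s := one_sub_svar_ne; have h1st := one_sub_st_ne
  rw [Qlp, Qlp, a0c, a2c,
    show q + m + 1 - (q + 1) = m from by omega, show q + m - q = m from by omega,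
    show q + m + 1 + 1 = q + m + 2 from by omega, show q + 1 + 1 = q + 2 from by omega]
  rw [div_mul_eq_mul_div, div_mul_eq_mul_div, div_add_div _ _ (by positivity) (by positivity),
    div_eq_zero_iff]
  left
  linear_combination tvar⁻¹ ^ q * svar ^ (q + m + 2) * (1 - svar) ^ (q + 3) *
    (1 - svar * tvar) ^ (m + 2) * mul_inv_cancel₀ ht

lemma pairD (q m : ℕ) : Qlp (q + m + 1) q * a2c + Qlp (q + m) q * a3c = 0 := by
  have ht := tvar_ne; have h1s := one_sub_svar_ne; have h1st := one_sub_st_ne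
  rw [Qlp, Qlp, a2c, a3c,
    show q + m + 1 - q = m + 1 from by omega, show q + m - q = m from by omega,
    show q + m + 1 + 1 = q + m + 2 from by omega]
  rw [div_mul_eq_mul_div, div_mul_eq_mul_div, div_add_div _ _ (by positivity) (by positivity),
    div_eq_zero_iff]
  left
  ring

lemma base31 : Qlp 3 1 * a0c = svar ^ 4 := by
  have ht := tvar_ne; have h1s := one_sub_svar_ne; have h1st := one_sub_st_ne
  rw [Qlp, a0c, show (3:ℕ) - 1 = 2 from by norm_num, show (3:ℕ) + 1 = 4 from by norm_num,
    show (1:ℕ) + 1 = 2 from by norm_num]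
  rw [pow_one]
  field_simp
  rw [mul_div_assoc, div_self (by rwa [mul_comm] at h1st), mul_one]

lemma key (l p : ℕ) :
    Tc l p * a0c
    + (if 1 ≤ l then Tc (l - 1) p * a1c else 0)
    + (if 1 ≤ l ∧ 1 ≤ p then Tc (l - 1) (p - 1) * a2c else 0)
    + (if 2 ≤ l ∧ 1 ≤ p then Tc (l - 2) (p - 1) * a3c else 0)
    = if l = 3 ∧ p = 1 then svar ^ 4 else 0 := by
  rcases p with _ | q
  · simp [Tc]
  simp only [Nat.add_sub_cancel]
  rcases lt_or_ge l (q + 3) with hl | hl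
  · have h1 : Tc l (q + 1) = 0 := by rw [Tc, if_neg]; omega
    have h2 : Tc (l - 1) (q + 1) = 0 := by rw [Tc, if_neg]; omega
    have h3 : Tc (l - 1) q = 0 := by rw [Tc, if_neg]; omega
    have h4 : Tc (l - 2) q = 0 := by rw [Tc, if_neg]; omega
    rw [h1, h2, h3, h4, if_neg (show ¬(l = 3 ∧ q + 1 = 1) from by omega)]
    simp
  obtain ⟨k, rfl⟩ : ∃ k, l = q + 3 + k := ⟨l - (q + 3), by omega⟩
  rcases k with _ | k
  · rcases q with _ | r
    · -- (l, p) = (3, 1)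
      rw [show (0:ℕ) + 3 + 0 = 3 from rfl, show (0:ℕ) + 1 = 1 from rfl]
      rw [if_pos (show (1:ℕ) ≤ 3 from by omega),
        if_pos (show (1:ℕ) ≤ 3 ∧ (1:ℕ) ≤ 1 from by omega),
        if_pos (show (2:ℕ) ≤ 3 ∧ (1:ℕ) ≤ 1 from by omega),
        if_pos (show (3:ℕ) = 3 ∧ (1:ℕ) = 1 from by omega)]
      simp only [Tc]
      rw [if_pos (show (1:ℕ) ≤ 1 ∧ (1:ℕ) + 2 ≤ 3 from by omega),
        if_neg (show ¬((1:ℕ) ≤ 1 ∧ (1:ℕ) + 2 ≤ 3 - 1) from by omega),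
        if_neg (show ¬((1:ℕ) ≤ 0 ∧ (0:ℕ) + 2 ≤ 3 - 1) from by omega),
        if_neg (show ¬((1:ℕ) ≤ 0 ∧ (0:ℕ) + 2 ≤ 3 - 2) from by omega)]
      linear_combination base31
    · -- p = r + 2, l = r + 4
      rw [show r + 1 + 3 + 0 = r + 4 from by omega, show r + 1 + 1 = r + 2 from by omega]
      rw [if_pos (show (1:ℕ) ≤ r + 4 from by omega),
        if_pos (show (1:ℕ) ≤ r + 4 ∧ (1:ℕ) ≤ r + 2 from by omega),
        if_pos (show (2:ℕ) ≤ r + 4 ∧ (1:ℕ) ≤ r + 2 from by omega),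
        if_neg (show ¬(r + 4 = 3 ∧ r + 2 = 1) from by omega)]
      simp only [Tc]
      rw [if_pos (show (1:ℕ) ≤ r + 2 ∧ r + 2 + 2 ≤ r + 4 from by omega),
        if_neg (show ¬((1:ℕ) ≤ r + 2 ∧ r + 2 + 2 ≤ r + 4 - 1) from by omega),
        if_pos (show (1:ℕ) ≤ r + 1 ∧ r + 1 + 2 ≤ r + 4 - 1 from by omega),
        if_neg (show ¬((1:ℕ) ≤ r + 1 ∧ r + 1 + 2 ≤ r + 4 - 2) from by omega)]
      rw [show r + 4 - 1 = r + 3 from by omega]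
      have hB := pairB (r + 1) 2
      rw [show r + 1 + 2 + 1 = r + 4 from by omega, show r + 1 + 2 = r + 3 from by omega,
        show r + 1 + 1 = r + 2 from by omega] at hB
      linear_combination hB
  · rcases q with _ | r
    · -- p = 1, l = k + 4
      rw [show 0 + 3 + (k + 1) = k + 4 from by omega, show (0:ℕ) + 1 = 1 from rfl]
      rw [if_pos (show (1:ℕ) ≤ k + 4 from by omega),
        if_pos (show (1:ℕ) ≤ k + 4 ∧ (1:ℕ) ≤ 1 from by omega),
        if_pos (show (2:ℕ) ≤ k + 4 ∧ (1:ℕ) ≤ 1 from by omega),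
        if_neg (show ¬(k + 4 = 3 ∧ (1:ℕ) = 1) from by omega)]
      simp only [Tc]
      rw [if_pos (show (1:ℕ) ≤ 1 ∧ (1:ℕ) + 2 ≤ k + 4 from by omega),
        if_pos (show (1:ℕ) ≤ 1 ∧ (1:ℕ) + 2 ≤ k + 4 - 1 from by omega),
        if_neg (show ¬((1:ℕ) ≤ 0 ∧ (0:ℕ) + 2 ≤ k + 4 - 1) from by omega),
        if_neg (show ¬((1:ℕ) ≤ 0 ∧ (0:ℕ) + 2 ≤ k + 4 - 2) from by omega)]
      rw [show k + 4 - 1 = k + 3 from by omega]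
      have hA := pairA 1 (k + 2)
      rw [show 1 + (k + 2) + 1 = k + 4 from by omega,
        show 1 + (k + 2) = k + 3 from by omega] at hA
      linear_combination hA
    · -- p = r + 2, l = r + k + 5
      rw [show r + 1 + 3 + (k + 1) = r + k + 5 from by omega,
        show r + 1 + 1 = r + 2 from by omega]
      rw [if_pos (show (1:ℕ) ≤ r + k + 5 from by omega),
        if_pos (show (1:ℕ) ≤ r + k + 5 ∧ (1:ℕ) ≤ r + 2 from by omega),
        if_pos (show (2:ℕ) ≤ r + k + 5 ∧ (1:ℕ) ≤ r + 2 from by omega),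
        if_neg (show ¬(r + k + 5 = 3 ∧ r + 2 = 1) from by omega)]
      simp only [Tc]
      rw [if_pos (show (1:ℕ) ≤ r + 2 ∧ r + 2 + 2 ≤ r + k + 5 from by omega),
        if_pos (show (1:ℕ) ≤ r + 2 ∧ r + 2 + 2 ≤ r + k + 5 - 1 from by omega),
        if_pos (show (1:ℕ) ≤ r + 1 ∧ r + 1 + 2 ≤ r + k + 5 - 1 from by omega),
        if_pos (show (1:ℕ) ≤ r + 1 ∧ r + 1 + 2 ≤ r + k + 5 - 2 from by omega)]
      rw [show r + k + 5 - 1 = r + k + 4 from by omega,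
        show r + k + 5 - 2 = r + k + 3 from by omega]
      have hA := pairA (r + 2) (k + 2)
      rw [show r + 2 + (k + 2) + 1 = r + k + 5 from by omega,
        show r + 2 + (k + 2) = r + k + 4 from by omega] at hA
      have hD := pairD (r + 1) (k + 2)
      rw [show r + 1 + (k + 2) + 1 = r + k + 4 from by omega,
        show r + 1 + (k + 2) = r + k + 3 from by omega] at hD
      linear_combination hA + hD

lemma pair_le (m n : ℕ) (e : Fin 2 →₀ ℕ) :
    (Finsupp.single 0 m + Finsupp.single 1 n) ≤ e ↔ m ≤ e 0 ∧ n ≤ e 1 := by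
  rw [Finsupp.le_def]
  constructor
  · intro h
    refine ⟨?_, ?_⟩
    · simpa using h 0
    · simpa using h 1
  · rintro ⟨h1, h2⟩ i
    fin_cases i <;> simp [h1, h2]

lemma pair_eq (m n : ℕ) (e : Fin 2 →₀ ℕ) :
    e = Finsupp.single 0 m + Finsupp.single 1 n ↔ e 0 = m ∧ e 1 = n := by
  constructor
  · rintro rfl; constructor <;> simp
  · rintro ⟨h1, h2⟩
    ext i
    fin_cases i <;> simp [h1, h2]

lemma pair_sub0 (m n : ℕ) (e : Fin 2 →₀ ℕ) :
    (e - (Finsupp.single 0 m + Finsupp.single 1 n) : Fin 2 →₀ ℕ) 0 = e 0 - m := by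
  simp [Finsupp.tsub_apply]

lemma pair_sub1 (m n : ℕ) (e : Fin 2 →₀ ℕ) :
    (e - (Finsupp.single 0 m + Finsupp.single 1 n) : Fin 2 →₀ ℕ) 1 = e 1 - n := by
  simp [Finsupp.tsub_apply]

lemma Cmono (a : QQst) (m n : ℕ) :
    MvPowerSeries.C (σ := Fin 2) (R := QQst) a * (MvPowerSeries.X 0 ^ m * MvPowerSeries.X 1 ^ n)
    = MvPowerSeries.monomial (Finsupp.single 0 m + Finsupp.single 1 n) a := by
  rw [MvPowerSeries.X_pow_eq, MvPowerSeries.X_pow_eq, MvPowerSeries.monomial_mul_monomial,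
    ← MvPowerSeries.monomial_zero_eq_C_apply, MvPowerSeries.monomial_mul_monomial, zero_add,
    one_mul, mul_one]

lemma coeff_Tser (d : Fin 2 →₀ ℕ) :
    MvPowerSeries.coeff d Tser = Tc (d 0) (d 1) := rfl

/-- The four-variable generating function identity
`T·(1-s)(1-st)·((1-st) - su)·((t-st) - suv) = s⁴u³v`, i.e.
`T = s⁴u³v / ((1-s)(1-st)(1-st-su)(t-st-suv))`. -/
theorem Tser_generating_function :
    Tser * (MvPowerSeries.C (σ := Fin 2) (R := QQst) ((1 - svar) * (1 - svar * tvar)) *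
      ((MvPowerSeries.C (σ := Fin 2) (R := QQst) (1 - svar * tvar) -
          MvPowerSeries.C (σ := Fin 2) (R := QQst) svar * MvPowerSeries.X 0) *
        (MvPowerSeries.C (σ := Fin 2) (R := QQst) (tvar - svar * tvar) -
          MvPowerSeries.C (σ := Fin 2) (R := QQst) svar * MvPowerSeries.X 0 * MvPowerSeries.X 1))) =
    MvPowerSeries.C (σ := Fin 2) (R := QQst) (svar ^ 4) * MvPowerSeries.X 0 ^ 3 * MvPowerSeries.X 1 := by
  have hM : (MvPowerSeries.C (σ := Fin 2) (R := QQst) ((1 - svar) * (1 - svar * tvar)) *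
      ((MvPowerSeries.C (σ := Fin 2) (R := QQst) (1 - svar * tvar) -
          MvPowerSeries.C (σ := Fin 2) (R := QQst) svar * MvPowerSeries.X 0) *
        (MvPowerSeries.C (σ := Fin 2) (R := QQst) (tvar - svar * tvar) -
          MvPowerSeries.C (σ := Fin 2) (R := QQst) svar * MvPowerSeries.X 0 * MvPowerSeries.X 1)))
      = MvPowerSeries.C (σ := Fin 2) (R := QQst) a0c
          * (MvPowerSeries.X 0 ^ 0 * MvPowerSeries.X 1 ^ 0)
        + MvPowerSeries.C (σ := Fin 2) (R := QQst) a1c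
          * (MvPowerSeries.X 0 ^ 1 * MvPowerSeries.X 1 ^ 0)
        + MvPowerSeries.C (σ := Fin 2) (R := QQst) a2c
          * (MvPowerSeries.X 0 ^ 1 * MvPowerSeries.X 1 ^ 1)
        + MvPowerSeries.C (σ := Fin 2) (R := QQst) a3c
          * (MvPowerSeries.X 0 ^ 2 * MvPowerSeries.X 1 ^ 1) := by
    simp only [a0c, a1c, a2c, a3c, map_mul, map_sub, map_one, map_neg, map_pow]
    ring
  have hR : MvPowerSeries.C (σ := Fin 2) (R := QQst) (svar ^ 4) * MvPowerSeries.X 0 ^ 3 * MvPowerSeries.X 1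
      = MvPowerSeries.C (σ := Fin 2) (R := QQst) (svar ^ 4)
        * (MvPowerSeries.X 0 ^ 3 * MvPowerSeries.X 1 ^ 1) := by ring
  rw [hM, hR, Cmono, Cmono, Cmono, Cmono, Cmono]
  rw [mul_add, mul_add, mul_add]
  apply MvPowerSeries.ext
  intro e
  rw [map_add, map_add, map_add, MvPowerSeries.coeff_mul_monomial,
    MvPowerSeries.coeff_mul_monomial, MvPowerSeries.coeff_mul_monomial,
    MvPowerSeries.coeff_mul_monomial, MvPowerSeries.coeff_monomial]
  simp only [pair_le, pair_eq, coeff_Tser, pair_sub0, pair_sub1]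
  simp only [Nat.zero_le, true_and, and_true, Nat.sub_zero, if_true]
  exact key (e 0) (e 1)
end

section
/- Let K be a field of characteristic zero, S = K[x_1, …, x_ℓ], and let f ∈ S be a nonzero squarefree homogeneous polynomial of degree ≥ 1. Then for every integer i ≥ 1 there is an isomorphism of S-modules Ext^i_S(D(f), S) ≅ Ext^{i+2}_S(S/J_f, S). -/
open CategoryTheory MvPolynomial

/-- The `n`-th Ext group of the `R`-modules `M` and `N`. -/
noncomputable def ExtGrp (R : Type) [CommRing R] (M N : ModuleCat R) (n : ℕ) : ModuleCat R :=
  ((Ext R (ModuleCat R) n).obj (Opposite.op M)).obj N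

/-- The module of logarithmic derivations
`D(f) = {θ ∈ S^ℓ : Σ_i θ_i ∂f/∂x_i ∈ (f)}`. -/
noncomputable def Dlog (K : Type) [CommRing K] (ℓ : ℕ) (f : MvPolynomial (Fin ℓ) K) :
    Submodule (MvPolynomial (Fin ℓ) K) (Fin ℓ → MvPolynomial (Fin ℓ) K) :=
  Submodule.comap
    (∑ i : Fin ℓ, (LinearMap.toSpanSingleton (MvPolynomial (Fin ℓ) K)
      (MvPolynomial (Fin ℓ) K) (pderiv i f)).comp (LinearMap.proj i))
    (Ideal.span {f})

/-- The Jacobian ideal `J_f = (∂f/∂x_1, …, ∂f/∂x_ℓ)`. -/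
noncomputable def jacobianIdeal (K : Type) [CommRing K] (ℓ : ℕ)
    (f : MvPolynomial (Fin ℓ) K) : Ideal (MvPolynomial (Fin ℓ) K) :=
  Ideal.span (Set.range fun i => pderiv i f)

/-! ### Auxiliary homological algebra: dimension shifting -/

noncomputable section DimShift

open CategoryTheory Limits

variable {R : Type} [CommRing R]

/-- Extend a projective resolution of `A` along a short exact sequence `0 → A → P → B → 0`. -/
noncomputable def extComplex {A P : ModuleCat R} (Q : ProjectiveResolution A) (g : A ⟶ P) :
    ChainComplex (ModuleCat R) ℕ :=
  ChainComplex.of (fun n => Nat.casesOn n P (fun k => Q.complex.X k))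
    (fun n => Nat.casesOn n (Q.π.f 0 ≫ g) (fun k => Q.complex.d (k+1) k))
    (by
      rintro (_|n)
      · show (Q.complex.d 1 0 ≫ (Q.π.f 0 ≫ g)) = 0
        erw [← Category.assoc, Q.complex_d_comp_π_f_zero, Limits.zero_comp]
      · show Q.complex.d (n+2) (n+1) ≫ Q.complex.d (n+1) n = 0
        simp)

lemma extComplex_d_one {A P : ModuleCat R} (Q : ProjectiveResolution A) (g : A ⟶ P) :
    (extComplex Q g).d 1 0 = Q.π.f 0 ≫ g := by unfold extComplex; exact ChainComplex.of_d (V := ModuleCat R) (α := ℕ) _ _ 0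

lemma extComplex_d_succ {A P : ModuleCat R} (Q : ProjectiveResolution A) (g : A ⟶ P) (n : ℕ) :
    (extComplex Q g).d (n+2) (n+1) = Q.complex.d (n+1) n := by unfold extComplex; exact ChainComplex.of_d (V := ModuleCat R) (α := ℕ) _ _ (n+1)

noncomputable def extResolution {A P B : ModuleCat R} (Q : ProjectiveResolution A)
    (g : A ⟶ P) (h : P ⟶ B)
    [Projective P] (hg : Function.Injective g) (hh : Function.Surjective h)
    (hgh : ∀ x : P, (∃ a : A, g a = x) ↔ h x = 0) : ProjectiveResolution B where
  complex := extComplex Q g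
  projective := by rintro (_|n) <;> dsimp [extComplex] <;> infer_instance
  π := (ChainComplex.toSingle₀Equiv _ _).symm ⟨h, by
    rw [extComplex_d_one]
    ext x
    show h (g (Q.π.f 0 x)) = 0
    exact (hgh (g (Q.π.f 0 x))).mp ⟨_, rfl⟩⟩
  quasiIso := ⟨fun n => by
    match n with
    | 0 =>
      rw [ChainComplex.quasiIsoAt₀_iff, ShortComplex.quasiIso_iff_of_zeros']
      rotate_left
      · rfl
      · rfl
      · rfl
      constructor
      · rw [ShortComplex.moduleCat_exact_iff]
        intro x hx
        dsimp at x hx ⊢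
        change h x = 0 at hx
        obtain ⟨a, ha⟩ := (hgh x).mpr hx
        obtain ⟨y, hy⟩ := (ModuleCat.epi_iff_surjective (Q.π.f 0)).mp inferInstance a
        refine ⟨y, ?_⟩
        change ((extComplex Q g).d 1 0) y = x
        rw [extComplex_d_one]
        show g (Q.π.f 0 y) = x
        rw [hy, ha]
      · change Epi h
        exact (ModuleCat.epi_iff_surjective h).mpr hh
    | (n+1) =>
      rw [quasiIsoAt_iff_exactAt']
      swap
      · apply ChainComplex.exactAt_succ_single_obj
      rw [HomologicalComplex.exactAt_iff' _ (n+2) (n+1) n (by simp) (by simp),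
        ShortComplex.moduleCat_exact_iff]
      match n with
      | 0 =>
        intro x hx
        dsimp at x hx ⊢
        change ((extComplex Q g).d 1 0) x = 0 at hx
        rw [extComplex_d_one] at hx
        replace hx : g.hom ((Q.π.f 0).hom x) = 0 := hx
        rw [← map_zero g.hom] at hx
        replace hx := hg hx
        obtain ⟨y, hy⟩ := (ShortComplex.moduleCat_exact_iff _).mp Q.exact₀ x hx
        refine ⟨y, ?_⟩
        change ((extComplex Q g).d 2 1) y = x
        rw [extComplex_d_succ]
        exact hy
      | (m+1) =>
        intro x hx
        dsimp at x hx ⊢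
        change ((extComplex Q g).d (m+1+1) (m+1)) x = 0 at hx
        rw [extComplex_d_succ] at hx
        obtain ⟨y, hy⟩ := (ShortComplex.moduleCat_exact_iff _).mp (Q.exact_succ m) x hx
        refine ⟨y, ?_⟩
        change ((extComplex Q g).d (m+1+2) (m+1+1)) y = x
        rw [extComplex_d_succ]
        exact hy⟩

noncomputable def homologyShift {A P : ModuleCat R} (Q : ProjectiveResolution A) (g : A ⟶ P)
    (Y : ModuleCat R) (n : ℕ) :
    ((extComplex Q g).linearYonedaObj R Y).homology (n+2) ≅
      (Q.complex.linearYonedaObj R Y).homology (n+1) :=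
  (HomologicalComplex.homologyIsoSc' _ (n+1) (n+2) (n+3)
      (CochainComplex.prev_nat_succ _) (CochainComplex.next _ _)) ≪≫
    ShortComplex.homologyMapIso
      ((ShortComplex.isoMk (Iso.refl _) (Iso.refl _) (Iso.refl _)
        (by dsimp; erw [Category.id_comp, Category.comp_id]; exact congrArg (fun φ => ((linearYoneda R (ModuleCat R)).obj Y).map φ.op) (extComplex_d_succ Q g n).symm)
        (by dsimp; erw [Category.id_comp, Category.comp_id]; exact congrArg (fun φ => ((linearYoneda R (ModuleCat R)).obj Y).map φ.op) (extComplex_d_succ Q g (n+1)).symm) :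
        HomologicalComplex.sc' ((extComplex Q g).linearYonedaObj R Y) (n+1) (n+2) (n+3) ≅
        HomologicalComplex.sc' (Q.complex.linearYonedaObj R Y) n (n+1) (n+2))) ≪≫
    (HomologicalComplex.homologyIsoSc' _ n (n+1) (n+2)
      (CochainComplex.prev_nat_succ _) (CochainComplex.next _ _)).symm

/-- Dimension shifting along a short exact sequence `0 → A → P → B → 0` with `P` projective. -/
noncomputable def dimShift {A P B : ModuleCat R} (g : A ⟶ P) (h : P ⟶ B)
    [Projective P] (hg : Function.Injective g) (hh : Function.Surjective h)
    (hgh : ∀ x : P, (∃ a : A, g a = x) ↔ h x = 0) (Y : ModuleCat R) (n : ℕ) :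
    ExtGrp R B Y (n+2) ≅ ExtGrp R A Y (n+1) :=
  let Q := projectiveResolution A
  ((extResolution Q g h hg hh hgh).isoExt (n+2) Y) ≪≫ homologyShift Q g Y n ≪≫
    (Q.isoExt (n+1) Y).symm

end DimShift

/-! ### Euler's formula -/

section Euler

variable {K' : Type} [CommRing K'] {ℓ : ℕ}

lemma euler_monomial (v : Fin ℓ →₀ ℕ) (c : K') :
    ∑ i : Fin ℓ, X i * pderiv i (monomial v c) = (Finsupp.degree v) • monomial v c := by
  have h1 : ∀ i : Fin ℓ, X i * pderiv i (monomial v c) = (v i) • monomial v c := by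
    intro i
    rw [pderiv_monomial]
    rcases Nat.eq_zero_or_pos (v i) with h | h
    · simp [h]
    · rw [X, monomial_mul, one_mul]
      have : Finsupp.single i 1 + (v - Finsupp.single i 1) = v := by
        ext j
        rcases eq_or_ne j i with rfl | hne
        · simp only [Finsupp.add_apply, Finsupp.single_eq_same, Finsupp.tsub_apply]
          omega
        · simp [Finsupp.single_eq_of_ne' (Ne.symm hne)]
      rw [this, smul_monomial]
      congr 1
      rw [nsmul_eq_mul, mul_comm]
  rw [Finset.sum_congr rfl (fun i _ => h1 i), ← Finset.sum_smul]
  congr 1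
  rw [Finsupp.degree]
  exact (Finset.sum_subset (Finset.subset_univ _) (by
    intro x _ hx
    exact Finsupp.notMem_support_iff.mp hx)).symm

lemma euler {f : MvPolynomial (Fin ℓ) K'} {d : ℕ} (hf : f.IsHomogeneous d) :
    ∑ i : Fin ℓ, X i * pderiv i f = d • f := by
  conv_lhs => rw [← f.support_sum_monomial_coeff]
  conv_rhs => rw [← f.support_sum_monomial_coeff]
  rw [Finset.smul_sum]
  simp only [map_sum, Finset.mul_sum]
  rw [Finset.sum_comm]
  refine Finset.sum_congr rfl (fun v hv => ?_)
  rw [euler_monomial]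
  congr 1
  have := hf (mem_support_iff.mp hv)
  rw [Finsupp.degree_eq_weight_one]
  exact_mod_cast this

end Euler

/-! ### The two short exact sequences -/

noncomputable section Maps

variable {ℓ : ℕ} {K : Type} [Field K] [CharZero K] (f : MvPolynomial (Fin ℓ) K)

local notation "S" => MvPolynomial (Fin ℓ) K

def Lmap : (Fin ℓ → S) →ₗ[S] S :=
  ∑ i : Fin ℓ, (LinearMap.toSpanSingleton S S (pderiv i f)).comp (LinearMap.proj i)

lemma Dlog_eq : Dlog K ℓ f = Submodule.comap (Lmap f) (Ideal.span {f}) := rfl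

lemma Lmap_apply (θ : Fin ℓ → S) : Lmap f θ = ∑ i : Fin ℓ, θ i • pderiv i f := by
  simp [Lmap, LinearMap.sum_apply]

lemma Lmap_mem (θ : Fin ℓ → S) : Lmap f θ ∈ jacobianIdeal K ℓ f := by
  rw [Lmap_apply]
  exact Ideal.sum_mem _ fun i _ => Ideal.mul_mem_left _ _ (Ideal.subset_span ⟨i, rfl⟩)

variable (hf0 : f ≠ 0)

lemma dlog_mem_span (θ : Dlog K ℓ f) : Lmap f θ.1 ∈ Ideal.span {f} := θ.2

/-- division by `f` on `Dlog`. -/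
def cdiv (θ : Dlog K ℓ f) : S :=
  ((Ideal.mem_span_singleton).mp (dlog_mem_span f θ)).choose

lemma cdiv_spec (θ : Dlog K ℓ f) : Lmap f θ.1 = f * cdiv f θ :=
  ((Ideal.mem_span_singleton).mp (dlog_mem_span f θ)).choose_spec

include hf0 in
lemma cdiv_unique (θ : Dlog K ℓ f) (s : S) (hs : Lmap f θ.1 = f * s) : cdiv f θ = s :=
  mul_left_cancel₀ hf0 ((cdiv_spec f θ).symm.trans hs)

def cdivₗ : Dlog K ℓ f →ₗ[S] S where
  toFun := cdiv f
  map_add' θ₁ θ₂ := by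
    apply cdiv_unique f hf0
    rw [Submodule.coe_add, map_add, cdiv_spec f θ₁, cdiv_spec f θ₂, mul_add]
  map_smul' s θ := by
    apply cdiv_unique f hf0
    rw [Submodule.coe_smul, map_smul, cdiv_spec f θ, smul_eq_mul, smul_eq_mul]
    simp only [RingHom.id_apply]
    ring

def gOne : Dlog K ℓ f →ₗ[S] (Fin ℓ → S) × S :=
  LinearMap.prod (Dlog K ℓ f).subtype (cdivₗ f hf0)

lemma gOne_injective : Function.Injective (gOne f hf0) := by
  intro a b hab
  exact Subtype.ext (congrArg Prod.fst hab)

variable (hhom : ∃ d : ℕ, 1 ≤ d ∧ f.IsHomogeneous d)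

include hhom in
lemma f_mem_jac : f ∈ jacobianIdeal K ℓ f := by
  obtain ⟨d, hd, hf⟩ := hhom
  have hne : ((d : K)) ≠ 0 := Nat.cast_ne_zero.mpr (by omega)
  have h := euler hf
  have hrw : f = C ((d : K)⁻¹) * ∑ i : Fin ℓ, X i * pderiv i f := by
    rw [h, nsmul_eq_mul, ← mul_assoc, ← map_natCast (C : K →+* S) d,
      ← C_mul, inv_mul_cancel₀ hne, C_1, one_mul]
  set J := jacobianIdeal K ℓ f with hJ
  rw [hrw, Finset.mul_sum]
  refine Ideal.sum_mem _ (fun i _ => ?_)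
  rw [← mul_assoc]
  exact Ideal.mul_mem_left _ _ (Ideal.subset_span ⟨i, rfl⟩)

def hOne : ((Fin ℓ → S) × S) →ₗ[S] jacobianIdeal K ℓ f :=
  LinearMap.codRestrict (jacobianIdeal K ℓ f)
    ((Lmap f).comp (LinearMap.fst S (Fin ℓ → S) S) -
      (LinearMap.toSpanSingleton S S f).comp (LinearMap.snd S (Fin ℓ → S) S))
    (by
      intro x
      simp only [LinearMap.sub_apply, LinearMap.comp_apply]
      exact sub_mem (Lmap_mem f _)
        (Ideal.mul_mem_left _ _ (f_mem_jac f hhom)))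

lemma hOne_surjective : Function.Surjective (hOne f hhom) := by
  rintro ⟨y, hy⟩
  rw [jacobianIdeal] at hy
  obtain ⟨cf, hcf⟩ := (Submodule.mem_span_range_iff_exists_fun _).mp hy
  refine ⟨(cf, 0), Subtype.ext ?_⟩
  show Lmap f cf - (0 : S) • f = y
  rw [Lmap_apply, zero_smul, sub_zero]
  simpa using hcf

lemma hOne_ker (x : (Fin ℓ → S) × S) :
    (∃ a : Dlog K ℓ f, gOne f hf0 a = x) ↔ hOne f hhom x = 0 := by
  constructor
  · rintro ⟨a, rfl⟩
    apply Subtype.ext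
    show Lmap f a.1 - (cdivₗ f hf0 a) • f = 0
    rw [cdiv_spec f a]
    show f * cdiv f a - (cdiv f a) * f = (0 : S)
    ring
  · intro hx
    have hx' : Lmap f x.1 - x.2 • f = 0 := congrArg Subtype.val hx
    rw [smul_eq_mul] at hx'
    have hmem : x.1 ∈ Dlog K ℓ f := by
      rw [Dlog_eq, Submodule.mem_comap, Ideal.mem_span_singleton]
      exact ⟨x.2, by linear_combination hx'⟩
    refine ⟨⟨x.1, hmem⟩, ?_⟩
    have : cdivₗ f hf0 ⟨x.1, hmem⟩ = x.2 := by
      apply cdiv_unique f hf0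
      linear_combination hx'
    exact Prod.ext rfl this

end Maps

/-- Let `K` be a field of characteristic zero, `S = K[x_1, …, x_ℓ]`, and `f ∈ S` a nonzero
squarefree homogeneous polynomial of degree `≥ 1`.  Then for every `i ≥ 1` there is an
isomorphism of `S`-modules `Ext^i_S(D(f), S) ≅ Ext^{i+2}_S(S/J_f, S)`. -/
theorem ext_Dlog_iso_ext_jacobian (K : Type) [Field K] [CharZero K] (ℓ : ℕ)
    (f : MvPolynomial (Fin ℓ) K)
    (hf0 : f ≠ 0) (hsq : Squarefree f) (hhom : ∃ d : ℕ, 1 ≤ d ∧ f.IsHomogeneous d) :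
    ∀ i : ℕ, 1 ≤ i →
      Nonempty (ExtGrp (MvPolynomial (Fin ℓ) K)
          (ModuleCat.of (MvPolynomial (Fin ℓ) K) (Dlog K ℓ f))
          (ModuleCat.of (MvPolynomial (Fin ℓ) K) (MvPolynomial (Fin ℓ) K)) i ≅
        ExtGrp (MvPolynomial (Fin ℓ) K)
          (ModuleCat.of (MvPolynomial (Fin ℓ) K)
            (MvPolynomial (Fin ℓ) K ⧸ jacobianIdeal K ℓ f))
          (ModuleCat.of (MvPolynomial (Fin ℓ) K) (MvPolynomial (Fin ℓ) K)) (i + 2)) := by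
  intro i hi
  obtain ⟨n, rfl⟩ : ∃ n, i = n + 1 := ⟨i - 1, by omega⟩

  haveI hP1 : Projective (ModuleCat.of (MvPolynomial (Fin ℓ) K) ((Fin ℓ → (MvPolynomial (Fin ℓ) K)) × (MvPolynomial (Fin ℓ) K))) :=
    (IsProjective.iff_projective _).mp inferInstance
  haveI hP2 : Projective (ModuleCat.of (MvPolynomial (Fin ℓ) K) (MvPolynomial (Fin ℓ) K)) :=
    (IsProjective.iff_projective _).mp inferInstance
  let Y : ModuleCat (MvPolynomial (Fin ℓ) K) := ModuleCat.of (MvPolynomial (Fin ℓ) K) (MvPolynomial (Fin ℓ) K)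
  let J := jacobianIdeal K ℓ f
  -- first dimension shift : Ext^{n+2}(J) ≅ Ext^{n+1}(D(f))
  let e1 := dimShift (A := ModuleCat.of (MvPolynomial (Fin ℓ) K) (Dlog K ℓ f))
    (P := ModuleCat.of (MvPolynomial (Fin ℓ) K) ((Fin ℓ → (MvPolynomial (Fin ℓ) K)) × (MvPolynomial (Fin ℓ) K)))
    (B := ModuleCat.of (MvPolynomial (Fin ℓ) K) J)
    (ModuleCat.ofHom (gOne f hf0)) (ModuleCat.ofHom (hOne f hhom))
    (gOne_injective f hf0) (hOne_surjective f hhom) (hOne_ker f hf0 hhom) Y n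
  -- second dimension shift : Ext^{n+3}(S/J) ≅ Ext^{n+2}(J)
  have hker2 : ∀ x : (ModuleCat.of (MvPolynomial (Fin ℓ) K) (MvPolynomial (Fin ℓ) K) : ModuleCat (MvPolynomial (Fin ℓ) K)),
      (∃ a : (ModuleCat.of (MvPolynomial (Fin ℓ) K) J : ModuleCat (MvPolynomial (Fin ℓ) K)), (ModuleCat.ofHom J.subtype) a = x) ↔
        (ModuleCat.ofHom J.mkQ) x = 0 := by
    intro x
    constructor
    · rintro ⟨a, rfl⟩
      exact (Submodule.Quotient.mk_eq_zero J).mpr a.2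
    · intro hx
      exact ⟨⟨x, (Submodule.Quotient.mk_eq_zero J).mp hx⟩, rfl⟩
  let e2 := dimShift (A := ModuleCat.of (MvPolynomial (Fin ℓ) K) J)
    (P := ModuleCat.of (MvPolynomial (Fin ℓ) K) (MvPolynomial (Fin ℓ) K))
    (B := ModuleCat.of (MvPolynomial (Fin ℓ) K) ((MvPolynomial (Fin ℓ) K) ⧸ J))
    (ModuleCat.ofHom J.subtype) (ModuleCat.ofHom J.mkQ)
    (Submodule.injective_subtype J) (Submodule.mkQ_surjective J) hker2 Y (n + 1)
  exact ⟨e1.symm ≪≫ e2.symm⟩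
end
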